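/- Let u : ℝ → ℝ be continuously differentiable on [0,1]. Then ∫₀¹ u(y)⁴ dy ≤ ( ∫₀¹ u(y)² dy + 2·(∫₀¹ u(y)² dy)^{1/2} · (∫₀¹ u'(y)² dy)^{1/2} )². -/

import Mathlib

open MeasureTheory Set

/-- AM-GM limit lemma: if `c ≤ ε A + B / ε` for all `ε > 0`, then `c ≤ 2 √A √B`. -/
lemma amgm_aux {c A B : ℝ} (hA : 0 ≤ A) (hB : 0 ≤ B)
    (h : ∀ ε : ℝ, 0 < ε → c ≤ ε * A + B / ε) : c ≤ 2 * Real.sqrt A * Real.sqrt B := by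
  have hsA := Real.sq_sqrt hA
  have hsB := Real.sq_sqrt hB
  have hsA0 := Real.sqrt_nonneg A
  have hsB0 := Real.sqrt_nonneg B
  rcases eq_or_lt_of_le hA with hA0 | hApos
  · have hc : c ≤ 0 := by
      by_contra hc
      push_neg at hc
      rcases eq_or_lt_of_le hB with hB0 | hBpos
      · have := h 1 one_pos
        rw [← hA0, ← hB0] at this
        norm_num at this
        linarith
      · have := h (2 * B / c) (by positivity)
        rw [← hA0] at this
        have h2 : B / (2 * B / c) = c / 2 := by
          field_simp
        rw [h2] at this
        linarith
    calc c ≤ 0 := hc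
      _ ≤ _ := by positivity
  rcases eq_or_lt_of_le hB with hB0 | hBpos
  · have hc : c ≤ 0 := by
      by_contra hc
      push_neg at hc
      have := h (c / (2 * A)) (by positivity)
      rw [← hB0] at this
      have h2 : c / (2 * A) * A = c / 2 := by field_simp
      rw [h2] at this
      simp at this
      linarith
    calc c ≤ 0 := hc
      _ ≤ _ := by positivity
  · have hsApos : 0 < Real.sqrt A := Real.sqrt_pos.2 hApos
    have hsBpos : 0 < Real.sqrt B := Real.sqrt_pos.2 hBpos
    have hkey := h (Real.sqrt B / Real.sqrt A) (by positivity)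
    have key : Real.sqrt B / Real.sqrt A * A + B / (Real.sqrt B / Real.sqrt A)
        = 2 * Real.sqrt A * Real.sqrt B := by
      field_simp
      nlinarith [hsA, hsB]
    linarith [key ▸ hkey]

/-- Inequality (3.2) of Lemma 3.1: for `u` continuously differentiable on `[0,1]`,
`∫₀¹ u⁴ ≤ (∫₀¹ u² + 2 (∫₀¹ u²)^{1/2} (∫₀¹ (u')²)^{1/2})²`. -/
theorem stmt_1 (u u' : ℝ → ℝ)
    (hderiv : ∀ x ∈ Icc (0:ℝ) 1, HasDerivAt u (u' x) x)
    (hcont : ContinuousOn u' (Icc (0:ℝ) 1)) :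
    (∫ y in (0:ℝ)..1, (u y) ^ 4) ≤
      ((∫ y in (0:ℝ)..1, (u y) ^ 2)
        + 2 * Real.sqrt (∫ y in (0:ℝ)..1, (u y) ^ 2)
            * Real.sqrt (∫ y in (0:ℝ)..1, (u' y) ^ 2)) ^ 2 := by
  have hu : ContinuousOn u (Icc (0:ℝ) 1) := fun x hx =>
    (hderiv x hx).continuousAt.continuousWithinAt
  have huIcc : uIcc (0:ℝ) 1 = Icc 0 1 := uIcc_of_le zero_le_one
  set A := ∫ y in (0:ℝ)..1, (u y) ^ 2 with hAdef
  set B := ∫ y in (0:ℝ)..1, (u' y) ^ 2 with hBdef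
  -- integrability
  have hint_u2 : IntervalIntegrable (fun y => u y ^ 2) volume 0 1 :=
    ((hu.pow 2).mono huIcc.subset).intervalIntegrable
  have hint_u'2 : IntervalIntegrable (fun y => u' y ^ 2) volume 0 1 :=
    ((hcont.pow 2).mono huIcc.subset).intervalIntegrable
  have hint_u4 : IntervalIntegrable (fun y => u y ^ 4) volume 0 1 :=
    ((hu.pow 4).mono huIcc.subset).intervalIntegrable
  have hg_cont : ContinuousOn (fun y => 2 * u y * u' y) (Icc (0:ℝ) 1) :=
    (continuousOn_const.mul hu).mul hcont
  have hint_abs : IntervalIntegrable (fun y => |2 * u y * u' y|) volume 0 1 :=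
    ((hg_cont.abs).mono huIcc.subset).intervalIntegrable
  have hA0 : 0 ≤ A := intervalIntegral.integral_nonneg zero_le_one (fun x _ => sq_nonneg _)
  have hB0 : 0 ≤ B := intervalIntegral.integral_nonneg zero_le_one (fun x _ => sq_nonneg _)
  have hsA0 := Real.sqrt_nonneg A
  have hsB0 := Real.sqrt_nonneg B
  -- Cauchy-Schwarz via AM-GM
  have hCS : (∫ y in (0:ℝ)..1, |2 * u y * u' y|) ≤ 2 * Real.sqrt A * Real.sqrt B := by
    apply amgm_aux hA0 hB0
    intro ε hε
    have hpt : ∀ y ∈ Icc (0:ℝ) 1, |2 * u y * u' y| ≤ ε * u y ^ 2 + u' y ^ 2 / ε := by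
      intro y _
      have hD : ε * (u' y ^ 2 / ε) = u' y ^ 2 := by field_simp
      rw [abs_le]
      constructor
      · nlinarith [sq_nonneg (ε * u y + u' y), hD, hε, sq_nonneg (u' y)]
      · nlinarith [sq_nonneg (ε * u y - u' y), hD, hε, sq_nonneg (u' y)]
    calc (∫ y in (0:ℝ)..1, |2 * u y * u' y|)
        ≤ ∫ y in (0:ℝ)..1, (ε * u y ^ 2 + u' y ^ 2 / ε) := by
          exact intervalIntegral.integral_mono_on zero_le_one hint_abs
            ((hint_u2.const_mul ε).add (hint_u'2.div_const ε)) hpt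
      _ = ε * A + B / ε := by
          rw [intervalIntegral.integral_add (hint_u2.const_mul ε) (hint_u'2.div_const ε),
            intervalIntegral.integral_const_mul, intervalIntegral.integral_div]
  -- minimum point
  obtain ⟨y₀, hy₀mem, hy₀min⟩ := isCompact_Icc.exists_isMinOn (nonempty_Icc.2 zero_le_one)
    (hu.pow 2)
  have hmin : u y₀ ^ 2 ≤ A := by
    have h1 : (∫ y in (0:ℝ)..1, u y₀ ^ 2) ≤ A :=
      intervalIntegral.integral_mono_on zero_le_one intervalIntegrable_const hint_u2
        (fun x hx => hy₀min hx)
    simpa using h1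
  set M := A + 2 * Real.sqrt A * Real.sqrt B with hMdef
  have hM0 : 0 ≤ M := by positivity
  have hAM : A ≤ M := by nlinarith
  -- pointwise bound u x ^ 2 ≤ M
  have hbd : ∀ x ∈ Icc (0:ℝ) 1, u x ^ 2 ≤ M := by
    intro x hx
    have hsub : uIcc y₀ x ⊆ Icc (0:ℝ) 1 := uIcc_subset_Icc hy₀mem hx
    have hsub' : uIcc y₀ x ⊆ uIcc (0:ℝ) 1 := huIcc ▸ hsub
    have hftc : (∫ t in y₀..x, 2 * u t * u' t) = u x ^ 2 - u y₀ ^ 2 := by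
      apply intervalIntegral.integral_eq_sub_of_hasDerivAt
      · intro t ht
        have := (hderiv t (hsub ht)).fun_pow 2
        simpa [mul_comm, mul_assoc, mul_left_comm] using this
      · exact (hg_cont.mono hsub).intervalIntegrable
    have habs : |∫ t in y₀..x, 2 * u t * u' t| ≤ ∫ y in (0:ℝ)..1, |2 * u y * u' y| := by
      have h1 : |∫ t in y₀..x, 2 * u t * u' t| ≤ |∫ t in y₀..x, (|2 * u t * u' t|)| := by
        have := intervalIntegral.norm_integral_le_abs_integral_norm
          (f := fun t => 2 * u t * u' t) (a := y₀) (b := x) (μ := volume)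
        simp only [Real.norm_eq_abs] at this
        exact this
      have h2 : |∫ t in y₀..x, (|2 * u t * u' t|)| ≤ |∫ y in (0:ℝ)..1, (|2 * u y * u' y|)| :=
        intervalIntegral.abs_integral_mono_interval
          (uIoc_subset_uIoc_of_uIcc_subset_uIcc hsub')
          (Filter.Eventually.of_forall fun t => abs_nonneg _) hint_abs
      have h3 : |∫ y in (0:ℝ)..1, (|2 * u y * u' y|)| = ∫ y in (0:ℝ)..1, |2 * u y * u' y| :=
        abs_of_nonneg (intervalIntegral.integral_nonneg zero_le_one fun t _ => abs_nonneg _)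
      linarith [h1, h3 ▸ h2]
    have : u x ^ 2 - u y₀ ^ 2 ≤ 2 * Real.sqrt A * Real.sqrt B := by
      calc u x ^ 2 - u y₀ ^ 2 = ∫ t in y₀..x, 2 * u t * u' t := hftc.symm
        _ ≤ |∫ t in y₀..x, 2 * u t * u' t| := le_abs_self _
        _ ≤ ∫ y in (0:ℝ)..1, |2 * u y * u' y| := habs
        _ ≤ 2 * Real.sqrt A * Real.sqrt B := hCS
    have := hmin
    rw [hMdef]
    linarith
  -- conclude
  have hstep : (∫ y in (0:ℝ)..1, u y ^ 4) ≤ M * A := by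
    calc (∫ y in (0:ℝ)..1, u y ^ 4) ≤ ∫ y in (0:ℝ)..1, M * u y ^ 2 := by
          apply intervalIntegral.integral_mono_on zero_le_one hint_u4 (hint_u2.const_mul M)
          intro x hx
          nlinarith [hbd x hx, sq_nonneg (u x)]
      _ = M * A := by rw [intervalIntegral.integral_const_mul]
  calc (∫ y in (0:ℝ)..1, u y ^ 4) ≤ M * A := hstep
    _ ≤ M ^ 2 := by nlinarith
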